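/- arXiv:1806.09008 — 3 statements merged into one kernel-verified Lean document; each statement's English description precedes it below -/
import Mathlib

section
/- Let n ≥ 5 be an integer and a ≠ 0 a real number, and set b = (n−1)²a²/(4n(n−2)). Set m₀ = ⌊(n−3)/2⌋, for 0 ≤ k ≤ m₀ let S_k = (n−1)³·C(n−k−3,k)·a⁴ − [n(n−1)(5n² − (6k+23)n + 10k + 24)/(n−k−3)]·C(n−k−3,k)·a²b + 4n²(n−2)·C(n−k−4,k)·b², let γ = Σ_{k=0}^{m₀} (−1)^{n+k} n^k (n−1)^{n−2k−4} (n−2)^k a^{n−2k−4} b^k S_k, and let Q(t) = (n−2)^{n−2}(a² − 4b)t² + γ t − nⁿ b^{n−1}. Then for every real t, Q(t) = −[(n−2)^{n−3}a²/n]·( t + (−1)^n n (n−1)^{n−1} a^{n−2} / (2^{n−1}(n−2)^{n−2}) )²; in particular the discriminant γ² + 4·(n−2)^{n−2}(a² − 4b)·nⁿ b^{n−1} of the quadratic Q is zero. -/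
noncomputable def Aseq (m : ℕ) : ℝ :=
  ∑ k ∈ Finset.range (m+1), (-(1:ℝ)/4)^k * ((m - k).choose k : ℝ)

lemma A_rec (m : ℕ) : Aseq (m+2) = Aseq (m+1) + (-(1:ℝ)/4) * Aseq m := by
  have L : Aseq (m+2)
      = (∑ k ∈ Finset.range (m+1),
          (-(1:ℝ)/4)^(k+1) * (((m-k).choose k : ℝ) + ((m-k).choose (k+1) : ℝ))) + 1 := by
    rw [Aseq, Finset.sum_range_succ' _ (m+2), Finset.sum_range_succ _ (m+1)]
    have h0 : ((m+2-(m+1+1)).choose (m+1+1) : ℝ) = 0 := by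
      rw [show m+2-(m+1+1) = 0 from by omega, Nat.choose_eq_zero_of_lt (by omega)]; norm_num
    rw [h0, mul_zero, add_zero]
    have h1 : ∀ k ∈ Finset.range (m+1),
        (-(1:ℝ)/4)^(k+1) * ((m+2-(k+1)).choose (k+1) : ℝ)
        = (-(1:ℝ)/4)^(k+1) * (((m-k).choose k : ℝ) + ((m-k).choose (k+1) : ℝ)) := by
      intro k hk
      have hk' : k ≤ m := by simpa [Nat.lt_succ_iff] using hk
      rw [show m+2-(k+1) = (m-k)+1 from by omega, Nat.choose_succ_succ]
      push_cast; ring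
    rw [Finset.sum_congr rfl h1]
    norm_num
  have R : Aseq (m+1)
      = (∑ k ∈ Finset.range (m+1), (-(1:ℝ)/4)^(k+1) * ((m-k).choose (k+1) : ℝ)) + 1 := by
    rw [Aseq, Finset.sum_range_succ' _ (m+1)]
    have h1 : ∀ k ∈ Finset.range (m+1),
        (-(1:ℝ)/4)^(k+1) * ((m+1-(k+1)).choose (k+1) : ℝ)
        = (-(1:ℝ)/4)^(k+1) * ((m-k).choose (k+1) : ℝ) := by
      intro k hk
      rw [show m+1-(k+1) = m-k from by omega]
    rw [Finset.sum_congr rfl h1]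
    norm_num
  rw [L, R, Aseq, Finset.mul_sum, add_right_comm, ← Finset.sum_add_distrib]
  congr 1
  apply Finset.sum_congr rfl
  intro k hk
  ring

lemma A_val (m : ℕ) : Aseq m = ((m:ℝ)+1)/2^m := by
  induction m using Nat.strong_induction_on with
  | _ m ih =>
    match m with
    | 0 => simp [Aseq]
    | 1 =>
      rw [Aseq, Finset.sum_range_succ, Finset.sum_range_succ, Finset.sum_range_zero]
      norm_num
    | (p+2) =>
      rw [A_rec, ih (p+1) (by omega), ih p (by omega)]
      push_cast
      field_simp
      ring

lemma key_sum (M : ℕ) :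
    ∑ k ∈ Finset.range ((M+2)/2 + 1),
      (-(1:ℝ)/4)^k * (((M:ℝ)+2)/(((M:ℝ)+2)-(k:ℝ))) * ((M+2-k).choose k : ℝ)
      = 2 / 2^(M+2) := by
  have hden : ∀ k : ℕ, k < M+2 → ((M:ℝ)+2)-(k:ℝ) ≠ 0 := by
    intro k h
    have : (k:ℝ) < (M:ℝ)+2 := by exact_mod_cast h
    intro hc; linarith [sub_eq_zero.mp hc]
  -- split each term
  have hsplit : ∀ k ∈ Finset.range ((M+2)/2 + 1),
      (-(1:ℝ)/4)^k * (((M:ℝ)+2)/(((M:ℝ)+2)-(k:ℝ))) * ((M+2-k).choose k : ℝ)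
      = (-(1:ℝ)/4)^k * ((M+2-k).choose k : ℝ)
        + (-(1:ℝ)/4)^k * ((k:ℝ)/(((M:ℝ)+2)-(k:ℝ))) * ((M+2-k).choose k : ℝ) := by
    intro k hk
    have hk' : k ≤ (M+2)/2 := by simpa [Nat.lt_succ_iff] using hk
    have hklt : k < M+2 := by omega
    have h0 := hden k hklt
    field_simp
    ring
  rw [Finset.sum_congr rfl hsplit, Finset.sum_add_distrib]
  -- first sum = Aseq (M+2)
  have hS1 : ∑ k ∈ Finset.range ((M+2)/2 + 1),
      (-(1:ℝ)/4)^k * ((M+2-k).choose k : ℝ) = Aseq (M+2) := by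
    rw [Aseq]
    apply Finset.sum_subset
    · intro x hx
      simp only [Finset.mem_range] at *
      omega
    · intro x _ hx
      simp only [Finset.mem_range, not_lt] at hx
      have : M+2-x < x := by omega
      rw [Nat.choose_eq_zero_of_lt this]
      norm_num
  -- second sum = (-(1:ℝ)/4) * Aseq M
  have hS2 : ∑ k ∈ Finset.range ((M+2)/2 + 1),
      (-(1:ℝ)/4)^k * ((k:ℝ)/(((M:ℝ)+2)-(k:ℝ))) * ((M+2-k).choose k : ℝ)
      = (-(1:ℝ)/4) * Aseq M := by
    rw [Finset.sum_range_succ']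
    have h1 : ∀ k ∈ Finset.range ((M+2)/2),
        (-(1:ℝ)/4)^(k+1) * (((k+1:ℕ):ℝ)/(((M:ℝ)+2)-((k+1:ℕ):ℝ))) * ((M+2-(k+1)).choose (k+1) : ℝ)
        = (-(1:ℝ)/4) * ((-(1:ℝ)/4)^k * ((M-k).choose k : ℝ)) := by
      intro k hk
      have hk' : k < (M+2)/2 := by simpa using hk
      have hkM : k ≤ M := by omega
      have hnat := Nat.add_one_mul_choose_eq (M-k) k
      have hMk : M - k + 1 = M + 2 - (k+1) := by omega
      rw [hMk] at hnat
      have hcast : ((M+2-(k+1) : ℕ) : ℝ) * ((M-k).choose k : ℝ)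
          = ((M+2-(k+1)).choose (k+1) : ℝ) * ((k:ℝ)+1) := by exact_mod_cast hnat
      have hc2 : ((M+2-(k+1) : ℕ) : ℝ) = ((M:ℝ)+2) - ((k+1:ℕ):ℝ) := by
        rw [Nat.cast_sub (by omega)]; push_cast; ring
      rw [hc2] at hcast
      have h0 : ((M:ℝ)+2) - ((k+1:ℕ):ℝ) ≠ 0 := hden (k+1) (by omega)
      have hkey : (((k+1:ℕ):ℝ)/(((M:ℝ)+2)-((k+1:ℕ):ℝ))) * ((M+2-(k+1)).choose (k+1) : ℝ)
          = ((M-k).choose k : ℝ) := by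
        rw [div_mul_eq_mul_div, div_eq_iff h0]
        push_cast
        push_cast at hcast
        linear_combination -hcast
      rw [mul_assoc, hkey]
      ring
    rw [Finset.sum_congr rfl h1]
    simp only [Nat.cast_zero, zero_div, mul_zero, zero_mul, add_zero, pow_zero, one_mul]
    rw [← Finset.mul_sum]
    congr 1
    rw [Aseq]
    apply Finset.sum_subset
    · intro x hx
      simp only [Finset.mem_range] at *
      omega
    · intro x _ hx
      simp only [Finset.mem_range, not_lt] at hx
      have : M-x < x := by omega
      rw [Nat.choose_eq_zero_of_lt this]
      norm_num
  rw [hS1, hS2, A_val, A_val]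
  push_cast
  field_simp
  ring

lemma zpow_helper (x : ℝ) (hx : x ≠ 0) (K k : ℕ) :
    x ^ ((K:ℤ) + 5 - 2*(k:ℤ) - 4) = x^(K+1) / x^(2*k) := by
  have he : (K:ℤ) + 5 - 2*(k:ℤ) - 4 = ((K+1:ℕ):ℤ) - ((2*k:ℕ):ℤ) := by push_cast; ring
  rw [he, zpow_sub₀ hx, zpow_natCast, zpow_natCast]

set_option maxHeartbeats 4000000 in
theorem Q_perfect_square_at_critical_b (n : ℕ) (hn : 5 ≤ n) (a : ℝ) (ha : a ≠ 0)
    (b : ℝ) (hb : b = ((n : ℝ) - 1) ^ 2 * a ^ 2 / (4 * (n : ℝ) * ((n : ℝ) - 2)))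
    (γ : ℝ)
    (hγ : γ = ∑ k ∈ Finset.range ((n - 3) / 2 + 1),
        (-1 : ℝ) ^ (n + k) * (n : ℝ) ^ k * ((n : ℝ) - 1) ^ ((n : ℤ) - 2 * k - 4) *
          ((n : ℝ) - 2) ^ k * a ^ ((n : ℤ) - 2 * k - 4) * b ^ k *
          (((n : ℝ) - 1) ^ 3 * ((n - k - 3).choose k : ℝ) * a ^ 4 -
            ((n : ℝ) * ((n : ℝ) - 1) *
                (5 * (n : ℝ) ^ 2 - (6 * (k : ℝ) + 23) * (n : ℝ) + 10 * (k : ℝ) + 24) /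
              ((n : ℝ) - (k : ℝ) - 3)) * ((n - k - 3).choose k : ℝ) * a ^ 2 * b +
            4 * (n : ℝ) ^ 2 * ((n : ℝ) - 2) * ((n - k - 4).choose k : ℝ) * b ^ 2))
    (Q : ℝ → ℝ)
    (hQ : ∀ t : ℝ, Q t = ((n : ℝ) - 2) ^ (n - 2) * (a ^ 2 - 4 * b) * t ^ 2 + γ * t -
        (n : ℝ) ^ n * b ^ (n - 1)) :
    (∀ t : ℝ, Q t = -(((n : ℝ) - 2) ^ (n - 3) * a ^ 2 / (n : ℝ)) *
        (t + (-1 : ℝ) ^ n * (n : ℝ) * ((n : ℝ) - 1) ^ (n - 1) * a ^ (n - 2) /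
          (2 ^ (n - 1) * ((n : ℝ) - 2) ^ (n - 2))) ^ 2) ∧
      γ ^ 2 + 4 * ((n : ℝ) - 2) ^ (n - 2) * (a ^ 2 - 4 * b) * (n : ℝ) ^ n * b ^ (n - 1) = 0 := by
  obtain ⟨K, rfl⟩ : ∃ K, n = K + 5 := ⟨n - 5, by omega⟩
  clear hn
  have hK0 : (0:ℝ) ≤ (K:ℝ) := Nat.cast_nonneg K
  have h5 : ((K:ℝ)+5) ≠ 0 := by positivity
  have h4 : ((K:ℝ)+4) ≠ 0 := by positivity
  have h3 : ((K:ℝ)+3) ≠ 0 := by positivity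
  have h5' : ((K:ℝ)+5) - 2 ≠ 0 := by intro hc; nlinarith [hc]
  have h5'' : ((K:ℝ)+5) - 1 ≠ 0 := by intro hc; nlinarith [hc]
  push_cast at hb
  have hb' : b = ((K:ℝ)+4)^2 * a^2 / (4*((K:ℝ)+5)*((K:ℝ)+3)) := by
    rw [hb]; field_simp; ring
  have hbk : ∀ j : ℕ, b^j
      = ((K:ℝ)+4)^(2*j) * a^(2*j) / (4^j * ((K:ℝ)+5)^j * ((K:ℝ)+3)^j) := by
    intro j
    rw [hb', div_pow]
    simp only [mul_pow, ← pow_mul]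
  -- closed form for γ
  have hterm : ∀ k ∈ Finset.range ((K+2)/2 + 1),
      (-1 : ℝ) ^ (K+5 + k) * ((K+5 : ℕ) : ℝ) ^ k *
          (((K+5:ℕ) : ℝ) - 1) ^ (((K+5:ℕ) : ℤ) - 2 * k - 4) * (((K+5:ℕ) : ℝ) - 2) ^ k *
          a ^ (((K+5:ℕ) : ℤ) - 2 * k - 4) * b ^ k *
          ((((K+5:ℕ) : ℝ) - 1) ^ 3 * ((K+5 - k - 3).choose k : ℝ) * a ^ 4 -
            (((K+5:ℕ) : ℝ) * (((K+5:ℕ) : ℝ) - 1) *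
                (5 * ((K+5:ℕ) : ℝ) ^ 2 - (6 * (k : ℝ) + 23) * ((K+5:ℕ) : ℝ) + 10 * (k : ℝ) + 24) /
              (((K+5:ℕ) : ℝ) - (k : ℝ) - 3)) * ((K+5 - k - 3).choose k : ℝ) * a ^ 2 * b +
            4 * ((K+5:ℕ) : ℝ) ^ 2 * (((K+5:ℕ) : ℝ) - 2) * ((K+5 - k - 4).choose k : ℝ) * b ^ 2)
      = (-(-1:ℝ)^(K+5) * a^(K+5) * ((K:ℝ)+4)^(K+4) / (4*((K:ℝ)+3))) * ((-(1:ℝ)/4)^k * (((K:ℝ)+2)/(((K:ℝ)+2)-(k:ℝ))) * ((K+2-k).choose k : ℝ)) := by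
    intro k hk
    simp only [Finset.mem_range, Nat.lt_succ_iff] at hk
    have hk2 : 2*k ≤ K+2 := by omega
    have hkK : k ≤ K+1 := by omega
    have hkr : (k:ℝ) ≤ (K:ℝ)+1 := by exact_mod_cast hkK
    have hkr0 : ((K:ℝ)+2)-(k:ℝ) ≠ 0 := by intro hc; nlinarith [hc]
    have hkr1 : ((K:ℝ)+5)-(k:ℝ)-3 ≠ 0 := by intro hc; nlinarith [hc]
    rw [show K+5-k-3 = K+2-k from by omega, show K+5-k-4 = K+1-k from by omega]
    -- choose relation
    have hnat := Nat.choose_mul_succ_eq (K+1-k) k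
    rw [show K+1-k+1 = K+2-k from by omega] at hnat
    rw [show K+2-k-k = K+2-2*k from by omega] at hnat
    have hcast : ((K+1-k).choose k : ℝ) * (((K+2-k:ℕ)):ℝ)
        = ((K+2-k).choose k : ℝ) * (((K+2-2*k:ℕ)):ℝ) := by exact_mod_cast hnat
    rw [Nat.cast_sub (by omega : k ≤ K+2), Nat.cast_sub (by omega : 2*k ≤ K+2)] at hcast
    push_cast at hcast
    have hc2 : ((K+1-k).choose k : ℝ)
        = ((K:ℝ)+2-2*(k:ℝ)) * ((K+2-k).choose k : ℝ) / ((K:ℝ)+2-(k:ℝ)) := by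
      rw [eq_div_iff hkr0]
      linear_combination hcast
    push_cast
    rw [zpow_helper _ h5'' K k, zpow_helper a ha K k, hbk k, hc2, hb']
    rw [show (-(1:ℝ)/4)^k = (-1)^k/4^k from div_pow _ _ _]
    field_simp
    ring
  have hγ2 : γ = (-(-1:ℝ)^(K+5) * a^(K+5) * ((K:ℝ)+4)^(K+4) / (4*((K:ℝ)+3))) * (2 / 2^(K+2)) := by
    rw [hγ, show K+5-3 = K+2 from by omega, Finset.sum_congr rfl hterm, ← Finset.mul_sum,
      key_sum K]
  clear hγ hterm
  have h44 : (4:ℝ)^(K+4) = 2^(2*(K+4)) := by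
    rw [show (4:ℝ) = 2^2 from by norm_num, ← pow_mul]
  have hbk2 : b^(K+4)
      = ((K:ℝ)+4)^(2*(K+4)) * a^(2*(K+4)) / (2^(2*(K+4)) * ((K:ℝ)+5)^(K+4) * ((K:ℝ)+3)^(K+4)) := by
    rw [hbk (K+4), h44]
  simp only [show K+5-3 = K+2 from by omega, show K+5-2 = K+3 from by omega,
    show K+5-1 = K+4 from by omega] at hQ ⊢
  rcases Nat.even_or_odd (K+5) with hpar | hpar
  · rw [show ((-1:ℝ))^(K+5) = 1 from hpar.neg_one_pow] at hγ2 ⊢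
    constructor
    · intro t
      rw [hQ t, hγ2, hbk2, hb']
      push_cast
      field_simp
      ring
    · rw [hγ2, hbk2, hb']
      push_cast
      field_simp
      ring
  · rw [show ((-1:ℝ))^(K+5) = -1 from hpar.neg_one_pow] at hγ2 ⊢
    constructor
    · intro t
      rw [hQ t, hγ2, hbk2, hb']
      push_cast
      field_simp
      ring
    · rw [hγ2, hbk2, hb']
      push_cast
      field_simp
      ring
end

section
/- Let a be a real number and set b = 9a²/32 (the value (n−1)²a²/(4n(n−2)) for n = 4). Then for every real t, the discriminant of the polynomial x⁴ + t(x² + ax + b) in x equals (1/2)·a²·( t + (27/8)a² )²·t³. -/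
open Polynomial

/-- The discriminant of a real polynomial `f` of degree `n` with leading coefficient `c`,
computed via the formula `Δ(f) = (−1)^{n(n−1)/2} · Res(f, f′) / c
= (−1)^{n(n−1)/2} · c^{n−2} · ∏_{f(r)=0} f′(r)`, the product running over the roots of `f`
(with multiplicity) in the algebraic closure `ℂ`. -/
noncomputable def polyDisc (f : Polynomial ℝ) : ℂ :=
  (-1 : ℂ) ^ (f.natDegree * (f.natDegree - 1) / 2) *
    ((algebraMap ℝ ℂ) f.leadingCoeff) ^ (f.natDegree - 2) *
    (((f.map (algebraMap ℝ ℂ)).roots).map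
      fun z => Polynomial.eval z (Polynomial.derivative (f.map (algebraMap ℝ ℂ)))).prod

private lemma prod_swap_aux (R S : Multiset ℂ) (f : ℂ → ℂ → ℂ) :
    (R.map (fun r => (S.map (f r)).prod)).prod
      = (S.map (fun s => (R.map (fun r => f r s)).prod)).prod := by
  induction R using Multiset.induction with
  | empty => simp
  | cons a R ih =>
      simp only [Multiset.map_cons, Multiset.prod_cons, ih, ← Multiset.prod_map_mul]

theorem disc_quartic_critical (a : ℝ) (b : ℝ) (hb : b = 9 * a ^ 2 / 32) (t : ℝ) :
    polyDisc (X ^ 4 + C t * (X ^ 2 + C a * X + C b)) =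
      (((1 / 2) * a ^ 2 * (t + (27 / 8) * a ^ 2) ^ 2 * t ^ 3 : ℝ) : ℂ) := by
  subst hb
  set A : ℂ := (a : ℂ) with hA
  set T : ℂ := (t : ℂ) with hT
  set f : ℝ[X] := X ^ 4 + C t * (X ^ 2 + C a * X + C (9 * a ^ 2 / 32)) with hf
  set F : ℂ[X] := X ^ 4 + C T * (X ^ 2 + C A * X + C (9 * A ^ 2 / 32)) with hF
  have hmap : f.map (algebraMap ℝ ℂ) = F := by
    simp [hf, hF, Polynomial.map_add, Polynomial.map_mul, Polynomial.map_pow, map_C, map_X,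
      hA, hT]
  have hdegf : f.natDegree = 4 := by
    rw [hf]; compute_degree!
  have hmonf : f.leadingCoeff = 1 := by
    have : f.Monic := by rw [hf]; monicity!
    exact this
  have hmonF : F.Monic := by rw [hF]; monicity!
  have hdegF : F.natDegree = 4 := by rw [hF]; compute_degree!
  set G : ℂ[X] := derivative F with hG
  have hGeq : G = C 4 * X ^ 3 + C (2 * T) * X + C (A * T) := by
    rw [hG, hF]
    simp [derivative_pow, derivative_mul, derivative_add]
    ring
  have hdegG : G.natDegree = 3 := by rw [hGeq]; compute_degree!
  have hlcG : G.leadingCoeff = 4 := by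
    rw [Polynomial.leadingCoeff, hdegG, hGeq]
    simp [coeff_add, coeff_C_mul, coeff_X_pow, coeff_X, coeff_C]
  have hGne : G ≠ 0 := fun h => by simp [h] at hdegG
  -- roots
  have hFsplits : F.Splits := IsAlgClosed.splits F
  have hGsplits : G.Splits := IsAlgClosed.splits G
  have hFcard : F.roots.card = 4 := by
    rw [splits_iff_card_roots.mp hFsplits, hdegF]
  have hGcard : G.roots.card = 3 := by
    rw [splits_iff_card_roots.mp hGsplits, hdegG]
  have hFprod : F = (F.roots.map fun r => X - C r).prod :=
    hFsplits.eq_prod_roots_of_monic hmonF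
  have hGprod : G = C 4 * (G.roots.map fun s => X - C s).prod := by
    conv_lhs => rw [hGsplits.eq_prod_roots, hlcG]
  -- evaluation formulas
  have hGeval : ∀ z : ℂ, G.eval z = 4 * (G.roots.map fun s => z - s).prod := by
    intro z
    conv_lhs => rw [hGprod]
    rw [eval_mul, eval_C, eval_multiset_prod, Multiset.map_map]
    simp
  have hFeval : ∀ z : ℂ, F.eval z = (F.roots.map fun r => z - r).prod := by
    intro z
    conv_lhs => rw [hFprod]
    rw [eval_multiset_prod, Multiset.map_map]
    simp
  -- division identity
  have hdiv : F = C (1/4 : ℂ) * X * G + C (T / 2) * (X + C (3 * A / 4)) ^ 2 := by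
    apply Polynomial.funext
    intro z
    rw [hGeq, hF]
    simp
    ring
  have hFatG : ∀ s ∈ G.roots, F.eval s = (T / 2) * (s + 3 * A / 4) ^ 2 := by
    intro s hs
    have hs0 : G.eval s = 0 := (mem_roots hGne).mp hs
    have := congrArg (eval s) hdiv
    simpa [hs0] using this
  -- flipping sign inside products
  have hflipF : ∀ z : ℂ, ((F.roots).map fun r => r - z).prod
      = ((F.roots).map fun r => z - r).prod := by
    intro z
    have h1 : ((F.roots).map fun r => z - r).map Neg.neg
        = (F.roots).map fun r => r - z := by
      rw [Multiset.map_map]; simp [Function.comp_def, neg_sub]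
    calc ((F.roots).map fun r => r - z).prod
        = (((F.roots).map fun r => z - r).map Neg.neg).prod := by rw [h1]
      _ = (-1 : ℂ) ^ Multiset.card ((F.roots).map fun r => z - r)
            * ((F.roots).map fun r => z - r).prod := Multiset.prod_map_neg _
      _ = ((F.roots).map fun r => z - r).prod := by
            rw [Multiset.card_map, hFcard]; ring
  -- the main product
  have key : ((F.roots).map fun z => G.eval z).prod
      = 4 ^ 4 * ((G.roots).map fun s => F.eval s).prod := by
    have h1 : ((F.roots).map fun z => G.eval z).prod
        = ((F.roots).map fun r => 4 * (G.roots.map fun s => r - s).prod).prod := by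
      simp only [hGeval]
    rw [h1, Multiset.prod_map_mul]
    congr 1
    · simp [hFcard]; norm_num
    · rw [prod_swap_aux F.roots G.roots (fun r s => r - s)]
      apply congrArg Multiset.prod
      apply Multiset.map_congr rfl
      intro s _
      rw [hflipF s, ← hFeval s]
  -- the cubic product
  have hFG : ((G.roots).map fun s => F.eval s).prod
      = (T / 2) ^ 3 * (((G.roots).map fun s => s + 3 * A / 4).prod) ^ 2 := by
    rw [Multiset.map_congr rfl hFatG, Multiset.prod_map_mul]
    congr 1
    · simp [hGcard]; ring
    · rw [← Multiset.prod_map_pow]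
  -- evaluate the inner product
  have hP : ((G.roots).map fun s => s + 3 * A / 4).prod = 27 * A ^ 3 / 64 + A * T / 8 := by
    have h1 : ((G.roots).map fun s => s + 3 * A / 4).map Neg.neg
        = (G.roots).map fun s => -(3 * A / 4) - s := by
      rw [Multiset.map_map]
      exact Multiset.map_congr rfl (fun s _ => by simp [Function.comp_def]; ring)
    have hval : G.eval (-(3 * A / 4)) = 4 * (-(3 * A / 4)) ^ 3 + 2 * T * (-(3 * A / 4)) + A * T := by
      rw [hGeq]; simp
    have h2 := hGeval (-(3 * A / 4))
    rw [hval] at h2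
    rw [← h1] at h2
    rw [Multiset.prod_map_neg, Multiset.card_map, hGcard] at h2
    have : 4 * (-(3 * A / 4)) ^ 3 + 2 * T * (-(3 * A / 4)) + A * T
        = 4 * ((-1 : ℂ) ^ 3 * ((G.roots).map fun s => s + 3 * A / 4).prod) := h2
    linear_combination (1/4 : ℂ) * this
  -- assemble
  show polyDisc f = _
  rw [polyDisc, hdegf, hmonf, hmap, ← hG, key, hFG, hP]
  push_cast
  norm_num
  ring
end

section
/- Let q, r, s, t be complex numbers with q ≠ 0, and define the sequence (x_m) by x₀ = 0, x₁ = −qt, and x_{m+2} = −(r/q)·x_{m+1} − (s/q)·x_m for all m ≥ 0. Then for every integer m ≥ 1, s·x_m² − q·x_{m+1}² = q²·t·x_{2m+1}. -/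
theorem seq_index_doubling_odd (q r s t : ℂ) (hq : q ≠ 0)
    (x : ℕ → ℂ) (hx0 : x 0 = 0) (hx1 : x 1 = -q * t)
    (hxr : ∀ m : ℕ, x (m + 2) = -(r / q) * x (m + 1) - (s / q) * x m) :
    ∀ m : ℕ, 1 ≤ m → s * x m ^ 2 - q * x (m + 1) ^ 2 = q ^ 2 * t * x (2 * m + 1) := by
  have aux : ∀ n m : ℕ, q * x 1 * x (m + n + 1)
      = q * x (m + 1) * x (n + 1) - s * x m * x n := by
    intro n
    induction n using Nat.twoStepInduction with
    | zero => intro m; simp [hx0]; ring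
    | one =>
      intro m
      have e1 := hxr m
      have e2 := hxr 0
      rw [show m + 1 + 1 = m + 2 from rfl, e1, show (1:ℕ) + 1 = 0 + 2 from rfl, e2, hx0]
      field_simp
      ring
    | more n ih1 ih2 =>
      intro m
      have h1 := ih1 m
      have h2 : q * x 1 * x (m + n + 2) = q * x (m + 1) * x (n + 2) - s * x m * x (n + 1) := ih2 m
      have e1 : x (m + n + 3) = -(r / q) * x (m + n + 2) - (s / q) * x (m + n + 1) := hxr (m + n + 1)
      have e2 : x (n + 3) = -(r / q) * x (n + 2) - (s / q) * x (n + 1) := hxr (n + 1)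
      show q * x 1 * x (m + n + 3) = q * x (m + 1) * x (n + 3) - s * x m * x (n + 2)
      have e3 : x (n + 2) = -(r / q) * x (n + 1) - (s / q) * x n := hxr n
      rw [e1, e2]
      linear_combination (-(r / q)) * h2 + (-(s / q)) * h1 + (s * x m) * e3
  intro m _
  have h := aux m m
  rw [two_mul]
  linear_combination h - q * x (m + m + 1) * hx1
end
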